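/- Let $m \ge 1$, let $\tilde F, \tilde V$ be $m \times m$ real symmetric positive definite matrices that commute ($\tilde F \tilde V = \tilde V \tilde F$), let $\tilde D, \Delta\tilde V$ be $m \times m$ real symmetric matrices, and let $\mu > 0$. If the scaled Newton equation $\tilde F \circ \tilde V + \tilde D \circ \tilde V + \tilde F \circ \Delta \tilde V = \mu I$ holds, then $\mathrm{Tr}\left(\tilde D \tilde V + \tilde F \Delta\tilde V - \mu \tilde F^{-1} \tilde D - \mu \tilde V^{-1} \Delta\tilde V\right) = -\left\| \mu \tilde V^{-1/2} \tilde F^{-1/2} - \tilde F^{1/2} \tilde V^{1/2} \right\|_F^2 \le 0$, and this quantity equals zero if and only if $\tilde F \tilde V = \mu I$. -/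

import Mathlib

open Matrix

/-- The matrix square root of a positive semidefinite matrix, as defined in the older Mathlib
(`Matrix.PosSemidef.sqrt`, removed since). -/
noncomputable def Matrix.PosSemidef.sqrt {n : Type*} [Fintype n] [DecidableEq n]
    {A : Matrix n n ℝ} (hA : A.PosSemidef) : Matrix n n ℝ :=
  hA.1.eigenvectorUnitary.1 * diagonal ((√·) ∘ hA.1.eigenvalues) *
  (star hA.1.eigenvectorUnitary : Matrix n n ℝ)

theorem Matrix.PosSemidef.sqrt_mul_self {n : Type*} [Fintype n] [DecidableEq n]
    {A : Matrix n n ℝ} (hA : A.PosSemidef) : hA.sqrt * hA.sqrt = A := by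
  have hU : (star hA.1.eigenvectorUnitary : Matrix n n ℝ) * hA.1.eigenvectorUnitary.1 = 1 :=
    Unitary.coe_star_mul_self _
  have hD : diagonal ((√·) ∘ hA.1.eigenvalues) * diagonal ((√·) ∘ hA.1.eigenvalues)
      = diagonal hA.1.eigenvalues := by
    rw [diagonal_mul_diagonal]
    congr 1
    funext i
    exact Real.mul_self_sqrt (hA.eigenvalues_nonneg i)
  conv_rhs => rw [hA.1.spectral_theorem]
  simp only [Matrix.PosSemidef.sqrt, Unitary.conjStarAlgAut_apply, RCLike.ofReal_real_eq_id,
    Function.id_comp]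
  calc _ = hA.1.eigenvectorUnitary.1 * diagonal ((√·) ∘ hA.1.eigenvalues) *
        ((star hA.1.eigenvectorUnitary : Matrix n n ℝ) * hA.1.eigenvectorUnitary.1) *
        diagonal ((√·) ∘ hA.1.eigenvalues) * (star hA.1.eigenvectorUnitary : Matrix n n ℝ) := by
          simp only [mul_assoc]
    _ = _ := by rw [hU, mul_one, mul_assoc _ (diagonal _) (diagonal _), hD]

theorem Matrix.PosSemidef.posSemidef_sqrt {n : Type*} [Fintype n] [DecidableEq n]
    {A : Matrix n n ℝ} (hA : A.PosSemidef) : hA.sqrt.PosSemidef := by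
  have hd : (diagonal ((√·) ∘ hA.1.eigenvalues)).PosSemidef :=
    posSemidef_diagonal_iff.mpr fun i => Real.sqrt_nonneg _
  have := hd.mul_mul_conjTranspose_same (hA.1.eigenvectorUnitary.1)
  simpa [Matrix.PosSemidef.sqrt, Matrix.star_eq_conjTranspose] using this

open Matrix Polynomial


variable {n : Type*} [Fintype n] [DecidableEq n]

private def conjAlgHom (U : Matrix n n ℝ) (h1 : U * star U = 1) (h2 : star U * U = 1) :
    Matrix n n ℝ →ₐ[ℝ] Matrix n n ℝ where
  toFun M := U * M * star U
  map_one' := by show U * 1 * star U = 1; rw [mul_one, h1]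
  map_mul' M N := by
    have h2' : ∀ X : Matrix n n ℝ, star U * (U * X) = X := fun X => by
      rw [← mul_assoc, h2, one_mul]
    simp only [mul_assoc, h2']
  map_zero' := by simp
  map_add' M N := by noncomm_ring
  commutes' r := by
    show U * algebraMap ℝ (Matrix n n ℝ) r * star U = _
    simp only [Algebra.algebraMap_eq_smul_one, smul_mul_assoc, one_mul, mul_smul_comm, mul_one]
    rw [h1]

private lemma aeval_diagonal' (d : n → ℝ) (p : ℝ[X]) :
    aeval (Matrix.diagonal d) p = Matrix.diagonal (fun i => p.eval (d i)) := by
  have h1 : Matrix.diagonal d = Matrix.diagonalAlgHom (n := n) (α := ℝ) ℝ d := rfl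
  have h2 : (aeval d p : n → ℝ) = fun i => p.eval (d i) := by
    funext i
    have := (Polynomial.aeval_algHom_apply (Pi.evalAlgHom ℝ (fun _ : n => ℝ) i) d p).symm
    simpa [Polynomial.aeval_def, Polynomial.eval₂_eq_eval_map] using this
  rw [h1, Polynomial.aeval_algHom_apply, Matrix.diagonalAlgHom_apply, h2]

private lemma exists_poly_sqrt {A : Matrix n n ℝ} (hA : A.PosSemidef) :
    ∃ p : ℝ[X], aeval A p = hA.sqrt := by
  classical
  set U : Matrix n n ℝ := (hA.1.eigenvectorUnitary : Matrix n n ℝ) with hU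
  have hU1 : U * star U = 1 := (Matrix.mem_unitaryGroup_iff).mp (hA.1.eigenvectorUnitary).2
  have hU2 : star U * U = 1 := (Matrix.mem_unitaryGroup_iff').mp (hA.1.eigenvectorUnitary).2
  set s : Finset ℝ := Finset.univ.image hA.1.eigenvalues with hs
  refine ⟨Lagrange.interpolate s id Real.sqrt, ?_⟩
  set p := Lagrange.interpolate s id Real.sqrt with hp
  have hspec : A = conjAlgHom U hU1 hU2 (Matrix.diagonal hA.1.eigenvalues) := by
    have := hA.1.spectral_theorem
    simpa [conjAlgHom, RCLike.ofReal_real_eq_id, Function.comp_def] using this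
  have step : (aeval A) p = (conjAlgHom U hU1 hU2) (aeval (Matrix.diagonal hA.1.eigenvalues) p) := by
    conv_lhs => rw [hspec]
    rw [← Polynomial.aeval_algHom_apply]
  rw [step, aeval_diagonal']
  have hev : (fun i => p.eval (hA.1.eigenvalues i)) = fun i => Real.sqrt (hA.1.eigenvalues i) := by
    funext i
    exact Lagrange.eval_interpolate_at_node Real.sqrt (Set.injOn_id _)
      (Finset.mem_image_of_mem _ (Finset.mem_univ i))
  rw [hev]
  simp [Matrix.PosSemidef.sqrt, conjAlgHom, RCLike.ofReal_real_eq_id, Function.comp_def]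
  convert rfl

private lemma sqrt_commute {A B : Matrix n n ℝ} (hA : A.PosSemidef) (h : A * B = B * A) :
    hA.sqrt * B = B * hA.sqrt := by
  obtain ⟨p, hp⟩ := exists_poly_sqrt hA
  rw [← hp]
  clear hp
  induction p using Polynomial.induction_on' with
  | add p q hp' hq' => simp only [map_add, add_mul, mul_add, hp', hq']
  | monomial k c =>
      have hAB : Commute A B := h
      have hc1 : Commute (algebraMap ℝ (Matrix n n ℝ) c) B := Algebra.commutes c B
      have : Commute (aeval A (monomial k c)) B := by
        rw [Polynomial.aeval_monomial]
        exact hc1.mul_left (hAB.pow_left k)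
      exact this.eq

private lemma comm_inv {A B : Matrix n n ℝ} (h : IsUnit B.det) (hc : A * B = B * A) :
    A * B⁻¹ = B⁻¹ * A := by
  have h1 := B.nonsing_inv_mul h
  have h2 := B.mul_nonsing_inv h
  calc A * B⁻¹ = B⁻¹ * B * A * B⁻¹ := by rw [h1, one_mul]
    _ = B⁻¹ * (B * A) * B⁻¹ := by simp only [mul_assoc]
    _ = B⁻¹ * (A * B) * B⁻¹ := by rw [← hc]
    _ = B⁻¹ * A := by simp only [mul_assoc, h2, mul_one]

private lemma trace_tr_mul_self_nonneg (X : Matrix n n ℝ) : 0 ≤ (Xᵀ * X).trace := by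
  have : (Xᵀ * X).trace = ∑ i, ∑ j, (X j i)^2 := by
    simp [Matrix.trace, Matrix.diag, Matrix.mul_apply, sq]
  rw [this]
  positivity

private lemma trace_tr_mul_self_eq_zero (X : Matrix n n ℝ) : (Xᵀ * X).trace = 0 ↔ X = 0 := by
  have hrep : (Xᵀ * X).trace = ∑ i, ∑ j, (X j i)^2 := by
    simp [Matrix.trace, Matrix.diag, Matrix.mul_apply, sq]
  constructor
  · intro h
    rw [hrep] at h
    have h1 := (Finset.sum_eq_zero_iff_of_nonneg (fun i _ => Finset.sum_nonneg
      (fun j _ => sq_nonneg (X j i)))).mp h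
    ext j i
    have h2 := (Finset.sum_eq_zero_iff_of_nonneg (fun j _ => sq_nonneg (X j i))).mp
      (h1 i (Finset.mem_univ i)) j (Finset.mem_univ j)
    simpa using sq_eq_zero_iff.mp h2
  · intro h; simp [h]

/-- Core of Lemma 4(1): under the scaled Newton equation with commuting `F̃, Ṽ ≻ 0`,
the directional-derivative trace expression equals minus the squared Frobenius norm of
`μ Ṽ^{-1/2} F̃^{-1/2} - F̃^{1/2} Ṽ^{1/2}`, hence is `≤ 0`, vanishing iff `F̃Ṽ = μI`. -/
theorem stmt_8 {m : ℕ} (hm : 1 ≤ m) (tF tV tD ΔtV : Matrix (Fin m) (Fin m) ℝ)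
    (htF : tF.PosDef) (htV : tV.PosDef) (hcomm : tF * tV = tV * tF)
    (htD : tD.IsHermitian) (hΔ : ΔtV.IsHermitian) (μ : ℝ) (hμ : 0 < μ)
    (hNewton : (1/2 : ℝ) • (tF * tV + tV * tF) + (1/2 : ℝ) • (tD * tV + tV * tD)
        + (1/2 : ℝ) • (tF * ΔtV + ΔtV * tF) = μ • (1 : Matrix (Fin m) (Fin m) ℝ)) :
    (tD * tV + tF * ΔtV - μ • (tF⁻¹ * tD) - μ • (tV⁻¹ * ΔtV)).trace =
      -(((μ • ((htV.posSemidef.sqrt)⁻¹ * (htF.posSemidef.sqrt)⁻¹)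
            - htF.posSemidef.sqrt * htV.posSemidef.sqrt)ᵀ *
          (μ • ((htV.posSemidef.sqrt)⁻¹ * (htF.posSemidef.sqrt)⁻¹)
            - htF.posSemidef.sqrt * htV.posSemidef.sqrt)).trace) ∧
    (tD * tV + tF * ΔtV - μ • (tF⁻¹ * tD) - μ • (tV⁻¹ * ΔtV)).trace ≤ 0 ∧
    ((tD * tV + tF * ΔtV - μ • (tF⁻¹ * tD) - μ • (tV⁻¹ * ΔtV)).trace = 0 ↔
      tF * tV = μ • (1 : Matrix (Fin m) (Fin m) ℝ)) := by
  classical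
  have hdF : IsUnit tF.det := isUnit_iff_ne_zero.mpr htF.det_pos.ne'
  have hdV : IsUnit tV.det := isUnit_iff_ne_zero.mpr htV.det_pos.ne'
  set sF := htF.posSemidef.sqrt with hsF
  set sV := htV.posSemidef.sqrt with hsV
  have hsF2 : sF * sF = tF := htF.posSemidef.sqrt_mul_self
  have hsV2 : sV * sV = tV := htV.posSemidef.sqrt_mul_self
  have hsFt : sFᵀ = sF := by
    rw [← Matrix.conjTranspose_eq_transpose_of_trivial]
    exact htF.posSemidef.posSemidef_sqrt.1
  have hsVt : sVᵀ = sV := by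
    rw [← Matrix.conjTranspose_eq_transpose_of_trivial]
    exact htV.posSemidef.posSemidef_sqrt.1
  have hdsF : IsUnit sF.det := by
    have h : sF.det * sF.det = tF.det := by rw [← Matrix.det_mul, hsF2]
    refine isUnit_iff_ne_zero.mpr fun h0 => ?_
    rw [h0, mul_zero] at h
    exact htF.det_pos.ne' h.symm
  have hdsV : IsUnit sV.det := by
    have h : sV.det * sV.det = tV.det := by rw [← Matrix.det_mul, hsV2]
    refine isUnit_iff_ne_zero.mpr fun h0 => ?_
    rw [h0, mul_zero] at h
    exact htV.det_pos.ne' h.symm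
  have hFi : tF⁻¹ * tF = 1 := tF.nonsing_inv_mul hdF
  have hFi' : tF * tF⁻¹ = 1 := tF.mul_nonsing_inv hdF
  have hVi : tV⁻¹ * tV = 1 := tV.nonsing_inv_mul hdV
  have hVi' : tV * tV⁻¹ = 1 := tV.mul_nonsing_inv hdV
  have hsFi : sF⁻¹ * sF = 1 := sF.nonsing_inv_mul hdsF
  have hsFi' : sF * sF⁻¹ = 1 := sF.mul_nonsing_inv hdsF
  have hsVi : sV⁻¹ * sV = 1 := sV.nonsing_inv_mul hdsV
  have hsVi' : sV * sV⁻¹ = 1 := sV.mul_nonsing_inv hdsV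
  have hFinv2 : sF⁻¹ * sF⁻¹ = tF⁻¹ := by rw [← Matrix.mul_inv_rev, hsF2]
  have hVinv2 : sV⁻¹ * sV⁻¹ = tV⁻¹ := by rw [← Matrix.mul_inv_rev, hsV2]
  have cVF : tV * tF = tF * tV := hcomm.symm
  have csVF : sV * tF = tF * sV := sqrt_commute htV.posSemidef cVF
  have csFV : sF * tV = tV * sF := sqrt_commute htF.posSemidef hcomm
  have csFsV : sF * sV = sV * sF := sqrt_commute htF.posSemidef csVF.symm
  have cFVi : tF * tV⁻¹ = tV⁻¹ * tF := comm_inv hdV hcomm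
  have cVFi : tV * tF⁻¹ = tF⁻¹ * tV := comm_inv hdF cVF
  have csFsVi : sF * sV⁻¹ = sV⁻¹ * sF := comm_inv hdsV csFsV
  have csVsFi : sV * sF⁻¹ = sF⁻¹ * sV := comm_inv hdsF csFsV.symm
  -- E1
  have e1 : (tF * tV).trace + (tD * tV).trace + (tF * ΔtV).trace = μ * m := by
    have h := congrArg Matrix.trace hNewton
    simp only [Matrix.trace_add, Matrix.trace_smul, Matrix.trace_one, smul_eq_mul,
      Fintype.card_fin] at h
    rw [Matrix.trace_mul_comm tV tF, Matrix.trace_mul_comm tV tD,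
      Matrix.trace_mul_comm ΔtV tF] at h
    linarith
  -- E2
  have i1 : tV⁻¹ * tF⁻¹ * (tF * tV) = 1 := by
    calc tV⁻¹ * tF⁻¹ * (tF * tV) = tV⁻¹ * ((tF⁻¹ * tF) * tV) := by simp only [mul_assoc]
      _ = 1 := by rw [hFi, one_mul, hVi]
  have i2 : tV⁻¹ * tF⁻¹ * (tV * tF) = 1 := by
    calc tV⁻¹ * tF⁻¹ * (tV * tF) = tV⁻¹ * (tF⁻¹ * tV) * tF := by simp only [mul_assoc]
      _ = tV⁻¹ * (tV * tF⁻¹) * tF := by rw [← cVFi]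
      _ = (tV⁻¹ * tV) * ((tF⁻¹ * tF)) := by simp only [mul_assoc]
      _ = 1 := by rw [hVi, hFi, one_mul]
  have i3 : (tV⁻¹ * tF⁻¹ * (tD * tV)).trace = (tF⁻¹ * tD).trace := by
    calc (tV⁻¹ * tF⁻¹ * (tD * tV)).trace = ((tV⁻¹ * (tF⁻¹ * tD)) * tV).trace := by
          simp only [mul_assoc]
      _ = (tV * (tV⁻¹ * (tF⁻¹ * tD))).trace := Matrix.trace_mul_comm _ _
      _ = ((tV * tV⁻¹) * (tF⁻¹ * tD)).trace := by simp only [mul_assoc]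
      _ = (tF⁻¹ * tD).trace := by rw [hVi', one_mul]
  have i4 : tV⁻¹ * tF⁻¹ * (tV * tD) = tF⁻¹ * tD := by
    calc tV⁻¹ * tF⁻¹ * (tV * tD) = tV⁻¹ * (tF⁻¹ * tV) * tD := by simp only [mul_assoc]
      _ = tV⁻¹ * (tV * tF⁻¹) * tD := by rw [← cVFi]
      _ = (tV⁻¹ * tV) * (tF⁻¹ * tD) := by simp only [mul_assoc]
      _ = tF⁻¹ * tD := by rw [hVi, one_mul]
  have i5 : tV⁻¹ * tF⁻¹ * (tF * ΔtV) = tV⁻¹ * ΔtV := by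
    calc tV⁻¹ * tF⁻¹ * (tF * ΔtV) = tV⁻¹ * ((tF⁻¹ * tF) * ΔtV) := by simp only [mul_assoc]
      _ = tV⁻¹ * ΔtV := by rw [hFi, one_mul]
  have i6 : (tV⁻¹ * tF⁻¹ * (ΔtV * tF)).trace = (tV⁻¹ * ΔtV).trace := by
    calc (tV⁻¹ * tF⁻¹ * (ΔtV * tF)).trace = ((tV⁻¹ * (tF⁻¹ * ΔtV)) * tF).trace := by
          simp only [mul_assoc]
      _ = (tF * (tV⁻¹ * (tF⁻¹ * ΔtV))).trace := Matrix.trace_mul_comm _ _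
      _ = ((tF * tV⁻¹) * (tF⁻¹ * ΔtV)).trace := by simp only [mul_assoc]
      _ = ((tV⁻¹ * tF) * (tF⁻¹ * ΔtV)).trace := by rw [cFVi]
      _ = (tV⁻¹ * ((tF * tF⁻¹) * ΔtV)).trace := by simp only [mul_assoc]
      _ = (tV⁻¹ * ΔtV).trace := by rw [hFi', one_mul]
  have e2 : (m : ℝ) + (tF⁻¹ * tD).trace + (tV⁻¹ * ΔtV).trace = μ * (tV⁻¹ * tF⁻¹).trace := by
    have h := congrArg (fun M => ((tV⁻¹ * tF⁻¹) * M).trace) hNewton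
    simp only [Matrix.mul_add, Matrix.mul_smul, Matrix.trace_add, Matrix.trace_smul,
      smul_eq_mul, Matrix.mul_one] at h
    rw [i1, i2, i4, i5, i3, i6] at h
    simp only [Matrix.trace_one, Fintype.card_fin] at h
    linarith
  -- transpose of S
  have hSt : (μ • (sV⁻¹ * sF⁻¹) - sF * sV)ᵀ = μ • (sF⁻¹ * sV⁻¹) - sV * sF := by
    simp only [Matrix.transpose_sub, Matrix.transpose_smul, Matrix.transpose_mul,
      Matrix.transpose_nonsing_inv, hsFt, hsVt]
  -- the four product traces
  have a1 : (sF⁻¹ * sV⁻¹ * (sV⁻¹ * sF⁻¹)).trace = (tV⁻¹ * tF⁻¹).trace := by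
    calc (sF⁻¹ * sV⁻¹ * (sV⁻¹ * sF⁻¹)).trace
        = ((sF⁻¹ * (sV⁻¹ * sV⁻¹)) * sF⁻¹).trace := by simp only [mul_assoc]
      _ = (sF⁻¹ * (sF⁻¹ * (sV⁻¹ * sV⁻¹))).trace := Matrix.trace_mul_comm _ _
      _ = ((sF⁻¹ * sF⁻¹) * (sV⁻¹ * sV⁻¹)).trace := by simp only [mul_assoc]
      _ = (tF⁻¹ * tV⁻¹).trace := by rw [hFinv2, hVinv2]
      _ = (tV⁻¹ * tF⁻¹).trace := Matrix.trace_mul_comm _ _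
  have a2 : sF⁻¹ * sV⁻¹ * (sF * sV) = 1 := by
    calc sF⁻¹ * sV⁻¹ * (sF * sV) = sF⁻¹ * (sV⁻¹ * sF) * sV := by simp only [mul_assoc]
      _ = sF⁻¹ * (sF * sV⁻¹) * sV := by rw [← csFsVi]
      _ = (sF⁻¹ * sF) * (sV⁻¹ * sV) := by simp only [mul_assoc]
      _ = 1 := by rw [hsFi, hsVi, one_mul]
  have a3 : sV * sF * (sV⁻¹ * sF⁻¹) = 1 := by
    calc sV * sF * (sV⁻¹ * sF⁻¹) = sV * (sF * sV⁻¹) * sF⁻¹ := by simp only [mul_assoc]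
      _ = sV * (sV⁻¹ * sF) * sF⁻¹ := by rw [csFsVi]
      _ = (sV * sV⁻¹) * (sF * sF⁻¹) := by simp only [mul_assoc]
      _ = 1 := by rw [hsVi', hsFi', one_mul]
  have a4 : (sV * sF * (sF * sV)).trace = (tF * tV).trace := by
    calc (sV * sF * (sF * sV)).trace = ((sV * (sF * sF)) * sV).trace := by simp only [mul_assoc]
      _ = (sV * (sV * (sF * sF))).trace := Matrix.trace_mul_comm _ _
      _ = ((sV * sV) * (sF * sF)).trace := by simp only [mul_assoc]
      _ = (tV * tF).trace := by rw [hsF2, hsV2]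
      _ = (tF * tV).trace := Matrix.trace_mul_comm _ _
  have tSS : ((μ • (sV⁻¹ * sF⁻¹) - sF * sV)ᵀ * (μ • (sV⁻¹ * sF⁻¹) - sF * sV)).trace
      = μ ^ 2 * (tV⁻¹ * tF⁻¹).trace - 2 * μ * m + (tF * tV).trace := by
    rw [hSt]
    simp only [Matrix.sub_mul, Matrix.mul_sub, Matrix.smul_mul, Matrix.mul_smul,
      Matrix.trace_sub, Matrix.trace_smul, smul_eq_mul]
    rw [a1, a2, a3, a4]
    simp only [Matrix.trace_one, Fintype.card_fin]
    ring
  -- main equality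
  have heq : (tD * tV + tF * ΔtV - μ • (tF⁻¹ * tD) - μ • (tV⁻¹ * ΔtV)).trace =
      -(((μ • (sV⁻¹ * sF⁻¹) - sF * sV)ᵀ * (μ • (sV⁻¹ * sF⁻¹) - sF * sV)).trace) := by
    rw [tSS]
    simp only [Matrix.trace_sub, Matrix.trace_add, Matrix.trace_smul, smul_eq_mul]
    linear_combination e1 - μ * e2
  -- factorization of S
  have hsFiF : sF⁻¹ * tF = sF := by rw [← hsF2, ← mul_assoc, hsFi, one_mul]
  have hsViV : sV⁻¹ * tV = sV := by rw [← hsV2, ← mul_assoc, hsVi, one_mul]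
  have hprod : sV⁻¹ * sF⁻¹ * (tF * tV) = sF * sV := by
    calc sV⁻¹ * sF⁻¹ * (tF * tV) = sV⁻¹ * ((sF⁻¹ * tF) * tV) := by simp only [mul_assoc]
      _ = sV⁻¹ * (sF * tV) := by rw [hsFiF]
      _ = sV⁻¹ * (tV * sF) := by rw [csFV]
      _ = (sV⁻¹ * tV) * sF := by simp only [mul_assoc]
      _ = sV * sF := by rw [hsViV]
      _ = sF * sV := csFsV.symm
  have hfact : μ • (sV⁻¹ * sF⁻¹) - sF * sV
      = sV⁻¹ * sF⁻¹ * (μ • (1 : Matrix (Fin m) (Fin m) ℝ) - tF * tV) := by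
    rw [Matrix.mul_sub, Matrix.mul_smul, Matrix.mul_one, hprod]
  refine ⟨heq, ?_, ?_⟩
  · rw [heq]
    exact neg_nonpos_of_nonneg (trace_tr_mul_self_nonneg _)
  · rw [heq, neg_eq_zero, trace_tr_mul_self_eq_zero]
    constructor
    · intro hS0
      rw [hfact] at hS0
      have hS0' : sV⁻¹ * (sF⁻¹ * (μ • (1 : Matrix (Fin m) (Fin m) ℝ) - tF * tV)) = 0 := by
        rw [← mul_assoc]; exact hS0
      have hc1 : ∀ X : Matrix (Fin m) (Fin m) ℝ, sV * (sV⁻¹ * X) = X := fun X => by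
        rw [← mul_assoc, hsVi', one_mul]
      have hc2 : ∀ X : Matrix (Fin m) (Fin m) ℝ, sF * (sF⁻¹ * X) = X := fun X => by
        rw [← mul_assoc, hsFi', one_mul]
      have h1 : μ • (1 : Matrix (Fin m) (Fin m) ℝ) - tF * tV = 0 := by
        calc μ • (1 : Matrix (Fin m) (Fin m) ℝ) - tF * tV
            = sF * (sF⁻¹ * (μ • (1 : Matrix (Fin m) (Fin m) ℝ) - tF * tV)) := (hc2 _).symm
          _ = sF * (sV * (sV⁻¹ * (sF⁻¹ * (μ • (1 : Matrix (Fin m) (Fin m) ℝ) - tF * tV)))) := by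
              rw [hc1]
          _ = sF * (sV * 0) := by rw [hS0']
          _ = 0 := by rw [Matrix.mul_zero, Matrix.mul_zero]
      exact (sub_eq_zero.mp h1).symm
    · intro h0
      rw [hfact, h0, sub_self, Matrix.mul_zero]
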